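/- Let f : ℝⁿ → ℝⁿ be continuously differentiable, and let x₀, y₀ ∈ ℝⁿ. Then there exists ω ∈ [0,1] such that, setting ξ = ω·x₀ + (1−ω)·y₀ and letting Df(ξ) denote the Jacobian matrix of f at ξ, one has ‖f(x₀) − f(y₀)‖₂ ≤ sqrt(λ_max(Df(ξ)ᵀ · Df(ξ))) · ‖x₀ − y₀‖₂, where ‖·‖₂ is the Euclidean norm. -/

import Mathlib

open Matrix

/-- Largest eigenvalue of a real matrix, as the supremum of its real spectrum. -/
noncomputable def lambdaMax {n : ℕ} (S : Matrix (Fin n) (Fin n) ℝ) : ℝ :=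
  sSup (spectrum ℝ S)

/-- Weighted `M`-norm of a vector: `‖y‖_M = sqrt (yᵀ M y)`. -/
noncomputable def Mnorm {n : ℕ} (M : Matrix (Fin n) (Fin n) ℝ) (y : Fin n → ℝ) : ℝ :=
  Real.sqrt (y ⬝ᵥ (M *ᵥ y))

/-- Closed ball of radius `δ` about `x` in the `M`-norm. -/
def Mball {n : ℕ} (M : Matrix (Fin n) (Fin n) ℝ) (x : Fin n → ℝ) (δ : ℝ) :
    Set (Fin n → ℝ) :=
  {y | Mnorm M (y - x) ≤ δ}

/-- Jacobian matrix of `f : ℝⁿ → ℝⁿ` at `x`. -/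
noncomputable def jacobian {n : ℕ} (f : (Fin n → ℝ) → (Fin n → ℝ)) (x : Fin n → ℝ) :
    Matrix (Fin n) (Fin n) ℝ :=
  LinearMap.toMatrix' (fderiv ℝ f x).toLinearMap

lemma dot_self_nonneg' {n : ℕ} (v : Fin n → ℝ) : 0 ≤ v ⬝ᵥ v :=
  Finset.sum_nonneg fun _ _ => mul_self_nonneg _

lemma dot_cauchy_schwarz {n : ℕ} (v u : Fin n → ℝ) :
    v ⬝ᵥ u ≤ Real.sqrt (v ⬝ᵥ v) * Real.sqrt (u ⬝ᵥ u) := by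
  have h := Finset.sum_mul_sq_le_sq_mul_sq Finset.univ v u
  calc v ⬝ᵥ u ≤ |v ⬝ᵥ u| := le_abs_self _
    _ = Real.sqrt ((v ⬝ᵥ u) ^ 2) := (Real.sqrt_sq_eq_abs _).symm
    _ ≤ Real.sqrt ((∑ i, v i ^ 2) * (∑ i, u i ^ 2)) := Real.sqrt_le_sqrt h
    _ = Real.sqrt (v ⬝ᵥ v) * Real.sqrt (u ⬝ᵥ u) := by
        rw [Real.sqrt_mul (Finset.sum_nonneg fun i _ => sq_nonneg _)]
        simp [dotProduct, pow_two]

lemma rayleigh_le {n : ℕ} {S : Matrix (Fin n) (Fin n) ℝ} (hS : S.IsHermitian) (w : Fin n → ℝ) :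
    w ⬝ᵥ (S *ᵥ w) ≤ lambdaMax S * (w ⬝ᵥ w) := by
  set U : Matrix (Fin n) (Fin n) ℝ := (hS.eigenvectorUnitary : Matrix (Fin n) (Fin n) ℝ) with hUdef
  have hstar : star U = Uᵀ := by
    rw [Matrix.star_eq_conjTranspose, Matrix.conjTranspose_eq_transpose_of_trivial]
  have hU1 : U * Uᵀ = 1 := by
    rw [← hstar]; exact (Matrix.mem_unitaryGroup_iff).mp hS.eigenvectorUnitary.2
  set c : Fin n → ℝ := w ᵥ* U with hc
  have hcv : Uᵀ *ᵥ w = c := Matrix.mulVec_transpose U w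
  have key : w ⬝ᵥ (S *ᵥ w) = ∑ i, hS.eigenvalues i * (c i * c i) := by
    conv_lhs => rw [hS.spectral_theorem, Unitary.conjStarAlgAut_apply]
    rw [hstar, ← Matrix.mulVec_mulVec, ← Matrix.mulVec_mulVec, hcv,
      Matrix.dotProduct_mulVec, ← hc]
    simp [dotProduct, Matrix.mulVec_diagonal]
    ring_nf
    exact Finset.sum_congr rfl fun i _ => by ring
  have hww : w ⬝ᵥ w = ∑ i, c i * c i := by
    have : c ⬝ᵥ c = w ⬝ᵥ w := by
      nth_rewrite 2 [← hcv]
      rw [Matrix.dotProduct_mulVec, Matrix.vecMul_transpose, ← hcv,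
        Matrix.mulVec_mulVec, hU1, Matrix.one_mulVec]
    rw [← this]; rfl
  have hspec : spectrum ℝ S = Set.range hS.eigenvalues := hS.spectrum_real_eq_range_eigenvalues
  have hle : ∀ i, hS.eigenvalues i ≤ lambdaMax S := fun i => by
    rw [lambdaMax, hspec]
    exact le_csSup (Set.finite_range _).bddAbove (Set.mem_range_self i)
  rw [key, hww, Finset.mul_sum]
  exact Finset.sum_le_sum fun i _ =>
    mul_le_mul_of_nonneg_right (hle i) (mul_self_nonneg _)

lemma jacobian_mulVec {n : ℕ} (f : (Fin n → ℝ) → (Fin n → ℝ)) (x w : Fin n → ℝ) :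
    jacobian f x *ᵥ w = fderiv ℝ f x w := by
  rw [jacobian, ← Matrix.toLin'_apply, Matrix.toLin'_toMatrix']
  rfl

/-- discrepancy bound in the Euclidean norm via the
Cauchy–Green stretching factor at some point of the segment. -/
theorem discrepancy_euclidean {n : ℕ} (f : (Fin n → ℝ) → (Fin n → ℝ))
    (hf : ContDiff ℝ 1 f) (x₀ y₀ : Fin n → ℝ) :
    ∃ ω ∈ Set.Icc (0 : ℝ) 1,
      Real.sqrt ((f x₀ - f y₀) ⬝ᵥ (f x₀ - f y₀)) ≤
        Real.sqrt (lambdaMax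
            ((jacobian f (ω • x₀ + (1 - ω) • y₀))ᵀ *
              jacobian f (ω • x₀ + (1 - ω) • y₀))) *
          Real.sqrt ((x₀ - y₀) ⬝ᵥ (x₀ - y₀)) := by
  classical
  set v : Fin n → ℝ := f x₀ - f y₀ with hv
  set w : Fin n → ℝ := x₀ - y₀ with hw
  -- the dot-product-with-v continuous linear map
  let L : (Fin n → ℝ) →L[ℝ] ℝ := LinearMap.toContinuousLinearMap
    { toFun := fun u => v ⬝ᵥ u
      map_add' := fun a b => dotProduct_add v a b
      map_smul' := fun r a => by simp [dotProduct_smul] }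
  have hL : ∀ u, L u = v ⬝ᵥ u := fun u => rfl
  -- the segment
  set γ : ℝ → (Fin n → ℝ) := fun t => y₀ + t • w with hγ
  have hγd : ∀ t : ℝ, HasDerivAt γ w t := fun t => by
    have := ((hasDerivAt_id t).smul_const w).const_add y₀; rw [one_smul] at this; exact this
  have hfd : Differentiable ℝ f := hf.differentiable one_ne_zero
  set φ : ℝ → ℝ := fun t => L (f (γ t)) with hφ
  have hφd : ∀ t : ℝ, HasDerivAt φ (L (fderiv ℝ f (γ t) w)) t := fun t => by
    have h1 : HasDerivAt (fun s => f (γ s)) (fderiv ℝ f (γ t) w) t :=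
      (hfd (γ t)).hasFDerivAt.comp_hasDerivAt t (hγd t)
    exact (L.hasFDerivAt.comp_hasDerivAt t h1)
  have h01 : (0 : ℝ) < 1 := one_pos
  obtain ⟨c, hc, hceq⟩ := exists_hasDerivAt_eq_slope φ
    (fun t => L (fderiv ℝ f (γ t) w)) h01
    (fun t _ => (hφd t).continuousAt.continuousWithinAt)
    (fun t _ => hφd t)
  refine ⟨c, ⟨hc.1.le, hc.2.le⟩, ?_⟩
  have hξ : c • x₀ + (1 - c) • y₀ = γ c := by
    rw [hγ]; simp [hw, smul_sub]; module
  set ξ : Fin n → ℝ := γ c with hξ'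
  rw [hξ]
  set J : Matrix (Fin n) (Fin n) ℝ := jacobian f ξ with hJ
  -- the key identity: v ⬝ᵥ v = v ⬝ᵥ (J *ᵥ w)
  have hslope : φ 1 - φ 0 = v ⬝ᵥ v := by
    have hγ1 : γ 1 = x₀ := by rw [hγ]; simp [hw]
    have hγ0 : γ 0 = y₀ := by rw [hγ]; simp
    rw [hφ]; simp only [hγ1, hγ0, hL]
    rw [← dotProduct_sub]
  have hkey : v ⬝ᵥ v = v ⬝ᵥ (J *ᵥ w) := by
    have h2 := hceq
    rw [hL] at h2
    rw [hJ, jacobian_mulVec, h2, hslope]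
    simp
  -- Cauchy–Schwarz and Rayleigh
  have hherm : (Jᵀ * J).IsHermitian := by
    have := Matrix.isHermitian_conjTranspose_mul_self J
    rwa [Matrix.conjTranspose_eq_transpose_of_trivial] at this
  have hJwJw : (J *ᵥ w) ⬝ᵥ (J *ᵥ w) = w ⬝ᵥ ((Jᵀ * J) *ᵥ w) := by
    rw [← Matrix.mulVec_mulVec, Matrix.dotProduct_mulVec w Jᵀ (J *ᵥ w),
      Matrix.vecMul_transpose]
  have hray := rayleigh_le hherm w
  rw [← hJwJw] at hray
  have hCS := dot_cauchy_schwarz v (J *ᵥ w)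
  have hmono : Real.sqrt ((J *ᵥ w) ⬝ᵥ (J *ᵥ w)) ≤
      Real.sqrt (lambdaMax (Jᵀ * J)) * Real.sqrt (w ⬝ᵥ w) := by
    rw [← Real.sqrt_mul' _ (dot_self_nonneg' w)]
    exact Real.sqrt_le_sqrt hray
  set a := Real.sqrt (v ⬝ᵥ v) with ha
  have ha2 : a * a = v ⬝ᵥ v := Real.mul_self_sqrt (dot_self_nonneg' v)
  rcases eq_or_lt_of_le (Real.sqrt_nonneg (v ⬝ᵥ v)) with h0 | h0
  · rw [ha, ← h0]
    exact mul_nonneg (Real.sqrt_nonneg _) (Real.sqrt_nonneg _)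
  · rw [← ha] at h0
    have h1 : a * a ≤ a * Real.sqrt ((J *ᵥ w) ⬝ᵥ (J *ᵥ w)) := by
      rw [ha2, hkey]
      calc v ⬝ᵥ (J *ᵥ w) ≤ Real.sqrt (v ⬝ᵥ v) * Real.sqrt ((J *ᵥ w) ⬝ᵥ (J *ᵥ w)) := hCS
        _ = a * Real.sqrt ((J *ᵥ w) ⬝ᵥ (J *ᵥ w)) := by rw [ha]
    exact (le_of_mul_le_mul_left h1 h0).trans hmono
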